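/- Let p ≥ 0 and m ≥ 1 be integers and let G be a graph with m edges. Then there exist an orientation D of G and a bijection σ : A(D) → {p+1, ..., p+m} such that for every vertex v of G, ⌊(d_G(v)−1)/2⌋ − (p+m) ≤ s(v) ≤ ⌊(d_G(v)−1)/2⌋ + (p+m), where s(v) is the sum of labels of arcs entering v minus the sum of labels of arcs leaving v. -/

import Mathlib

variable {V : Type*} [Fintype V] [DecidableEq V]

/-- `A` is an orientation of the simple graph `G`: the arcs of `A` are exactly the edges of
`G`, each edge receiving exactly one of its two possible directions. -/
def IsOrientation (G : SimpleGraph V) (A : Finset (V × V)) : Prop :=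
  (∀ a ∈ A, G.Adj a.1 a.2) ∧
  (∀ u v : V, G.Adj u v → ((u, v) ∈ A ∨ (v, u) ∈ A)) ∧
  (∀ u v : V, (u, v) ∈ A → (v, u) ∉ A)

/-- The oriented vertex sum at `v`: the sum of labels of arcs entering `v` minus the sum of
labels of arcs leaving `v`. -/
def orientedSum (A : Finset (V × V)) (σ : V × V → ℤ) (v : V) : ℤ :=
  (∑ a ∈ A.filter (fun a => a.2 = v), σ a) - (∑ a ∈ A.filter (fun a => a.1 = v), σ a)

set_option linter.unusedSectionVars false

lemma orientedSum_congr {A : Finset (V × V)} {σ τ : V × V → ℤ}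
    (h : ∀ a ∈ A, σ a = τ a) (v : V) : orientedSum A σ v = orientedSum A τ v := by
  unfold orientedSum
  rw [Finset.sum_congr rfl fun a ha => h a (Finset.mem_filter.1 ha).1,
    Finset.sum_congr rfl fun a ha => h a (Finset.mem_filter.1 ha).1]

lemma orientedSum_union {A B : Finset (V × V)} (h : Disjoint A B) (σ : V × V → ℤ) (v : V) :
    orientedSum (A ∪ B) σ v = orientedSum A σ v + orientedSum B σ v := by
  unfold orientedSum
  rw [Finset.filter_union, Finset.filter_union, Finset.sum_union (Finset.disjoint_filter_filter h),
    Finset.sum_union (Finset.disjoint_filter_filter h)]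
  ring

lemma orientedSum_zero {A : Finset (V × V)} {σ : V × V → ℤ} {v : V}
    (h : ∀ a ∈ A, a.1 ≠ v ∧ a.2 ≠ v) : orientedSum A σ v = 0 := by
  unfold orientedSum
  rw [Finset.filter_false_of_mem (fun a ha => (h a ha).2),
    Finset.filter_false_of_mem (fun a ha => (h a ha).1)]
  simp

lemma orientedSum_singleton (a : V × V) (σ : V × V → ℤ) (v : V) :
    orientedSum {a} σ v = (if a.2 = v then σ a else 0) - (if a.1 = v then σ a else 0) := by
  unfold orientedSum
  rw [Finset.filter_singleton, Finset.filter_singleton]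
  split_ifs <;> simp

/-- Every graph with an edge has a vertex of degree 1 (with its edge) or a cycle,
presented as an injective cyclic sequence of vertices. -/
lemma leaf_or_cycle (G : SimpleGraph V) [DecidableRel G.Adj] {u₀ w₀ : V} (he : G.Adj u₀ w₀) :
    (∃ u w, G.Adj u w ∧ G.degree u = 1) ∨
    (∃ (k : ℕ) (g : ℕ → V), 3 ≤ k ∧ (∀ i j, i < k → j < k → g i = g j → i = j) ∧
      (∀ i, i + 1 < k → G.Adj (g i) (g (i + 1))) ∧ G.Adj (g (k - 1)) (g 0)) := by
  classical
  set P : ℕ → Prop := fun n => ∃ l : List V, l.Nodup ∧ l.Chain' G.Adj ∧ l.length = n with hP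
  have hP2 : P 2 := ⟨[u₀, w₀], by simp [he.ne], by simp [List.Chain', he], rfl⟩
  have hPbd : ∀ n, P n → n ≤ Fintype.card V := by
    rintro n ⟨l, hnd, -, rfl⟩; exact hnd.length_le_card
  set N := Nat.findGreatest P (Fintype.card V) with hN
  have hPN : P N := Nat.findGreatest_spec (hPbd 2 hP2) hP2
  have hN2 : 2 ≤ N := Nat.le_findGreatest (hPbd 2 hP2) hP2
  obtain ⟨l, hnd, hch, hlen⟩ := hPN
  rcases l with _ | ⟨a, _ | ⟨b, t⟩⟩
  · simp at hlen; omega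
  · simp at hlen; omega
  have hab : G.Adj a b := (List.isChain_cons.1 hch).1 b rfl
  by_cases hdeg : G.degree a = 1
  · exact Or.inl ⟨a, b, hab, hdeg⟩
  · -- degree a ≥ 2, get another neighbor x ≠ b
    have hbmem : b ∈ G.neighborFinset a := by simp [hab]
    have h2 : 2 ≤ G.degree a := by
      have h1 : 1 ≤ G.degree a := Finset.card_pos.2 ⟨b, hbmem⟩
      unfold SimpleGraph.degree at *; omega
    have hx : ∃ x, x ∈ (G.neighborFinset a).erase b := by
      apply Finset.card_pos.1
      rw [Finset.card_erase_of_mem hbmem]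
      unfold SimpleGraph.degree at h2; omega
    obtain ⟨x, hx⟩ := hx
    have hxb : x ≠ b := (Finset.mem_erase.1 hx).1
    have hax : G.Adj a x := by
      have := (Finset.mem_erase.1 hx).2; rwa [SimpleGraph.mem_neighborFinset] at this
    set L : List V := a :: b :: t with hL
    by_cases hxl : x ∈ L
    · -- cycle
      right
      obtain ⟨i, hi, hgi⟩ := List.mem_iff_getElem.1 hxl
      have hi2 : 2 ≤ i := by
        rcases Nat.lt_or_ge i 2 with h | h
        · interval_cases i
          · exact absurd (show a = x from hgi) (G.ne_of_adj hax)
          · exact absurd (show b = x from hgi).symm hxb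
        · exact h
      refine ⟨i + 1, fun j => L.getD j a, by omega, ?_, ?_, ?_⟩
      · intro i' j' hi' hj' hgg
        have hi'' : i' < L.length := by omega
        have hj'' : j' < L.length := by omega
        have hgg' : L.getD i' a = L.getD j' a := hgg
        rw [List.getD_eq_getElem _ _ hi'', List.getD_eq_getElem _ _ hj''] at hgg'
        exact (hnd.getElem_inj_iff.1 hgg')
      · intro j hj
        have hj' : j + 1 < L.length := by omega
        have hadj := List.isChain_iff_getElem.1 hch j (by omega)
        show G.Adj (L.getD j a) (L.getD (j+1) a)
        rw [List.getD_eq_getElem _ _ (by omega : j < L.length), List.getD_eq_getElem _ _ hj']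
        simpa [List.get_eq_getElem] using hadj
      · show G.Adj (L.getD (i + 1 - 1) a) (L.getD 0 a)
        have h10 : i + 1 - 1 = i := by omega
        rw [h10, List.getD_eq_getElem _ _ hi,
          List.getD_eq_getElem _ _ (by omega : 0 < L.length)]
        rw [hgi]
        exact hax.symm
    · -- extend the path: contradiction with maximality
      exfalso
      have hnd' : (x :: L).Nodup := List.nodup_cons.2 ⟨hxl, hnd⟩
      have hch' : (x :: L).Chain' G.Adj := List.isChain_cons.2
        ⟨fun y hy => by rw [L.head?_eq_head (by simp)] at hy; simp [hL] at hy; rw [← hy]; exact hax.symm, hch⟩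
      have hPN1 : P (N + 1) := ⟨x :: L, hnd', hch', by rw [List.length_cons, hlen]⟩
      have hle : N + 1 ≤ Fintype.card V := hPbd _ hPN1
      exact Nat.findGreatest_is_greatest (by omega) hle hPN1

set_option maxHeartbeats 1000000 in
/-- The inductive invariant. -/
def Conc (G : SimpleGraph V) [DecidableRel G.Adj] (q n : ℕ) : Prop :=
  ∃ A : Finset (V × V), IsOrientation G A ∧ ∃ σ : V × V → ℤ, Set.InjOn σ ↑A ∧
    A.image σ = Finset.Icc ((q : ℤ) + 1) ((q : ℤ) + n) ∧
    ∀ v : V, (G.degree v = 0 → orientedSum A σ v = 0) ∧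
      (0 < G.degree v → ((G.degree v : ℤ) - 1) / 2 - ((q : ℤ) + n) ≤ orientedSum A σ v ∧
        orientedSum A σ v ≤ ((G.degree v : ℤ) - 1) / 2 + ((q : ℤ) + n))

set_option maxHeartbeats 1000000 in
lemma key (n : ℕ) : ∀ (q : ℕ) (G : SimpleGraph V) [DecidableRel G.Adj],
    G.edgeFinset.card = n → Conc G q n := by
  induction n using Nat.strong_induction_on with
  | _ n IH =>
  intro q G instG hc
  rcases Nat.eq_zero_or_pos n with rfl | hn
  · -- base case : no edges
    have hadj : ∀ u v : V, ¬G.Adj u v := by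
      intro u v h
      have : s(u, v) ∈ G.edgeFinset := by rw [SimpleGraph.mem_edgeFinset]; exact h
      rw [Finset.card_eq_zero.1 hc] at this
      simp at this
    refine ⟨∅, ⟨by simp, fun u v h => absurd h (hadj u v), by simp⟩, fun _ => 0, by simp, ?_, ?_⟩
    · rw [Finset.image_empty]
      symm; apply Finset.Icc_eq_empty; push_cast; omega
    · intro v
      constructor
      · intro _; simp [orientedSum]
      · intro hpos
        exfalso
        have : G.degree v = 0 := by
          rw [← SimpleGraph.card_neighborFinset_eq_degree, Finset.card_eq_zero]
          exact Finset.eq_empty_of_forall_notMem fun x hx =>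
            hadj v x (by simpa using hx)
        omega
  · -- n ≥ 1 : there is an edge
    have hne : ∃ u w : V, G.Adj u w := by
      obtain ⟨e0, he0⟩ := Finset.card_pos.1 (by omega : 0 < G.edgeFinset.card)
      induction e0 using Sym2.ind with
      | _ u w => exact ⟨u, w, by rwa [SimpleGraph.mem_edgeFinset] at he0⟩
    obtain ⟨u₀, w₀, he₀⟩ := hne
    rcases leaf_or_cycle G he₀ with ⟨u, w, huw, hdu⟩ | ⟨k, g, hk3, ginj, gadj, gwrap⟩
    · -- LEAF CASE
      have hwu : u ≠ w := huw.ne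
      set Euw : Finset (Sym2 V) := {s(u, w)} with hEuw
      set G' := G.deleteEdges ↑Euw with hG'
      haveI instG' : DecidableRel G'.Adj := fun a b =>
        decidable_of_iff (G.Adj a b ∧ s(a, b) ∉ Euw)
          (by rw [hG', SimpleGraph.deleteEdges_adj, Finset.mem_coe])
      have hG'adj : ∀ a b : V, G'.Adj a b ↔ G.Adj a b ∧ s(a, b) ≠ s(u, w) := by
        intro a b
        rw [hG', SimpleGraph.deleteEdges_adj]
        simp [hEuw]
      have hsub : Euw ⊆ G.edgeFinset := by
        intro z hz
        rw [hEuw, Finset.mem_singleton] at hz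
        rw [hz, SimpleGraph.mem_edgeFinset]; exact huw
      have hES : G'.edgeSet = G.edgeSet \ ↑Euw := by
        rw [hG']; exact SimpleGraph.edgeSet_deleteEdges _
      have hEF : G'.edgeFinset = G.edgeFinset \ Euw := by
        ext z
        simp [SimpleGraph.mem_edgeFinset, hES]
      have hcard' : G'.edgeFinset.card = n - 1 := by
        rw [hEF, Finset.card_sdiff_of_subset hsub, hc, hEuw]
        simp
      obtain ⟨A', hor', σ', hinj', himg', hbd'⟩ :=
        IH (n - 1) (by omega) q G' hcard'
      -- degrees
      have hnbu : G.neighborFinset u = {w} := by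
        have hw : w ∈ G.neighborFinset u := by rw [SimpleGraph.mem_neighborFinset]; exact huw
        obtain ⟨x, hx⟩ := Finset.card_eq_one.1 hdu
        rw [hx] at hw ⊢
        rw [Finset.mem_singleton] at hw
        rw [hw]
      have hdu' : G'.degree u = 0 := by
        rw [← SimpleGraph.card_neighborFinset_eq_degree, Finset.card_eq_zero]
        apply Finset.eq_empty_of_forall_notMem
        intro x hx
        rw [SimpleGraph.mem_neighborFinset, hG'adj] at hx
        have : x ∈ G.neighborFinset u := by rw [SimpleGraph.mem_neighborFinset]; exact hx.1
        rw [hnbu, Finset.mem_singleton] at this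
        exact hx.2 (by rw [this])
      have hnbw : G'.neighborFinset w = (G.neighborFinset w).erase u := by
        ext x
        rw [SimpleGraph.mem_neighborFinset, hG'adj, Finset.mem_erase,
          SimpleGraph.mem_neighborFinset]
        constructor
        · rintro ⟨h1, h2⟩
          refine ⟨fun hxu => h2 ?_, h1⟩
          rw [hxu]; rw [Sym2.eq_iff]; right; exact ⟨rfl, rfl⟩
        · rintro ⟨h1, h2⟩
          refine ⟨h2, fun hh => h1 ?_⟩
          rw [Sym2.eq_iff] at hh
          rcases hh with ⟨h3, -⟩ | ⟨-, h4⟩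
          · exact absurd h3.symm hwu
          · exact h4
      have hwdeg1 : 1 ≤ G.degree w := by
        rw [← SimpleGraph.card_neighborFinset_eq_degree]
        refine Finset.card_pos.2 ⟨u, ?_⟩
        rw [SimpleGraph.mem_neighborFinset]; exact huw.symm
      have hdw' : (G'.degree w : ℤ) = (G.degree w : ℤ) - 1 := by
        rw [← SimpleGraph.card_neighborFinset_eq_degree, hnbw,
          Finset.card_erase_of_mem (by rw [SimpleGraph.mem_neighborFinset]; exact huw.symm),
          SimpleGraph.card_neighborFinset_eq_degree]
        have := hwdeg1; push_cast; omega
      have hdeq : ∀ x : V, x ≠ u → x ≠ w → G'.degree x = G.degree x := by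
        intro x hxu hxw
        rw [← SimpleGraph.card_neighborFinset_eq_degree,
          ← SimpleGraph.card_neighborFinset_eq_degree]
        congr 1
        ext y
        rw [SimpleGraph.mem_neighborFinset, hG'adj, SimpleGraph.mem_neighborFinset]
        constructor
        · exact fun h => h.1
        · intro h
          refine ⟨h, fun hh => ?_⟩
          rw [Sym2.eq_iff] at hh
          rcases hh with ⟨h3, -⟩ | ⟨h3, -⟩
          · exact hxu h3
          · exact hxw h3
      -- the new arc
      set c : ℤ := ((G.degree w : ℤ) - 1) / 2 with hcw
      set sw' : ℤ := orientedSum A' σ' w with hsw'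
      set e : V × V := if sw' ≤ c then (u, w) else (w, u) with he
      set T : ℤ := (q : ℤ) + n with hT
      set σ : V × V → ℤ := fun a => if a = e then T else σ' a with hσ
      have hσe : σ e = T := by simp [hσ]
      have he_cases : e = (u, w) ∨ e = (w, u) := by
        rw [he]; split_ifs
        · exact Or.inl rfl
        · exact Or.inr rfl
      have he_sym2 : s(e.1, e.2) = s(u, w) := by
        rcases he_cases with h | h
        · rw [h]
        · rw [h]; exact Sym2.eq_swap
      have hA'G : ∀ a ∈ A', G.Adj a.1 a.2 ∧ s(a.1, a.2) ≠ s(u, w) := by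
        intro a ha
        exact (hG'adj a.1 a.2).1 (hor'.1 a ha)
      have he_not : e ∉ A' := fun hmem => (hA'G e hmem).2 he_sym2
      have hσA' : ∀ a ∈ A', σ a = σ' a := by
        intro a ha
        rw [hσ]; simp only [ite_eq_right_iff]
        intro haa; exact absurd (haa ▸ ha) he_not
      have hAins : insert e A' = A' ∪ {e} := by ext a; simp [or_comm]
      have hn1cast : ((n - 1 : ℕ) : ℤ) = (n : ℤ) - 1 := by omega
      have hrange' : ∀ a ∈ A', (q : ℤ) + 1 ≤ σ' a ∧ σ' a ≤ (q : ℤ) + (n : ℤ) - 1 := by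
        intro a ha
        have : σ' a ∈ A'.image σ' := Finset.mem_image_of_mem σ' ha
        rw [himg', Finset.mem_Icc, hn1cast] at this
        omega
      refine ⟨insert e A', ⟨?_, ?_, ?_⟩, σ, ?_, ?_, ?_⟩
      · -- arcs are adjacent
        intro a ha
        rcases Finset.mem_insert.1 ha with rfl | ha'
        · rcases he_cases with h | h <;> rw [h]
          · exact huw
          · exact huw.symm
        · exact (hA'G a ha').1
      · -- covers all edges
        intro x y hxy
        by_cases hxe : s(x, y) = s(u, w)
        · rw [Sym2.eq_iff] at hxe
          rcases hxe with ⟨rfl, rfl⟩ | ⟨rfl, rfl⟩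
          · rcases he_cases with h | h
            · exact Or.inl (by rw [← h]; exact Finset.mem_insert_self e A')
            · exact Or.inr (by rw [← h]; exact Finset.mem_insert_self e A')
          · rcases he_cases with h | h
            · exact Or.inr (by rw [← h]; exact Finset.mem_insert_self e A')
            · exact Or.inl (by rw [← h]; exact Finset.mem_insert_self e A')
        · have : G'.Adj x y := (hG'adj x y).2 ⟨hxy, hxe⟩
          rcases hor'.2.1 x y this with h | h
          · exact Or.inl (Finset.mem_insert_of_mem h)
          · exact Or.inr (Finset.mem_insert_of_mem h)
      · -- antisymmetry
        intro x y hxy hyx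
        rcases Finset.mem_insert.1 hxy with h1 | h1 <;> rcases Finset.mem_insert.1 hyx with h2 | h2
        · rw [← h2] at h1
          obtain ⟨rfl, -⟩ := Prod.mk.inj h1
          rcases he_cases with h | h <;> rw [h] at h2
          · obtain ⟨h3, h4⟩ := Prod.mk.inj h2
            exact hwu (h3.symm.trans h4)
          · obtain ⟨h3, h4⟩ := Prod.mk.inj h2
            exact hwu (h4.symm.trans h3)
        · apply (hA'G (y, x) h2).2
          calc s(y, x) = s(x, y) := Sym2.eq_swap
          _ = s(e.1, e.2) := by rw [← h1]
          _ = s(u, w) := he_sym2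
        · apply (hA'G (x, y) h1).2
          calc s(x, y) = s(y, x) := Sym2.eq_swap
          _ = s(e.1, e.2) := by rw [← h2]
          _ = s(u, w) := he_sym2
        · exact hor'.2.2 x y h1 h2
      · -- injectivity
        intro a ha b hb hab
        rw [Finset.mem_coe] at ha hb
        rcases Finset.mem_insert.1 ha with rfl | ha' <;> rcases Finset.mem_insert.1 hb with h2 | hb'
        · rw [h2]
        · exfalso
          have hσb : σ b = σ' b := hσA' b hb'
          rw [hσe, hσb] at hab
          have := hrange' b hb'
          rw [hT] at hab; omega
        · exfalso
          have hσb : σ b = T := by rw [h2]; exact hσe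
          have hσa : σ a = σ' a := hσA' a ha'
          rw [hσa, hσb] at hab
          have := hrange' a ha'
          rw [hT] at hab; omega
        · rw [hσA' a ha', hσA' b hb'] at hab
          exact hinj' (Finset.mem_coe.2 ha') (Finset.mem_coe.2 hb') hab
      · -- image
        rw [Finset.image_insert, Finset.image_congr (fun a ha => hσA' a ha), himg', hσe]
        ext z
        simp only [Finset.mem_insert, Finset.mem_Icc, hn1cast, hT]
        omega
      · -- bounds
        have hsum : ∀ v : V, orientedSum (insert e A') σ v =
            orientedSum A' σ' v + ((if e.2 = v then T else 0) - (if e.1 = v then T else 0)) := by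
          intro v
          rw [hAins, orientedSum_union (Finset.disjoint_singleton_right.2 he_not),
            orientedSum_congr hσA', orientedSum_singleton, hσe]
        intro v
        constructor
        · intro hdv0
          have hvu : v ≠ u := fun h => by rw [h, hdu] at hdv0; omega
          have hvw : v ≠ w := fun h => by rw [h] at hdv0; omega
          rw [hsum v]
          have h1 : e.2 ≠ v := by
            rcases he_cases with h | h <;> rw [h]
            · exact hvw.symm
            · exact hvu.symm
          have h2 : e.1 ≠ v := by
            rcases he_cases with h | h <;> rw [h]
            · exact hvu.symm
            · exact hvw.symm
          rw [if_neg h1, if_neg h2]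
          have := (hbd' v).1 (by rw [hdeq v hvu hvw]; exact hdv0)
          omega
        · intro hpos
          rcases eq_or_ne v u with hv | hvu
          · -- v = u
            have hs'u : orientedSum A' σ' v = 0 := (hbd' v).1 (by rw [hv]; exact hdu')
            have hdegv : G.degree v = 1 := by rw [hv]; exact hdu
            rw [hsum v, hs'u, hdegv]
            rcases he_cases with h | h
            · have h1 : e.2 ≠ v := by rw [h, hv]; exact huw.ne'
              have h2 : e.1 = v := by rw [h]; exact hv.symm
              rw [if_neg h1, if_pos h2, hT]
              push_cast; omega
            · have h1 : e.2 = v := by rw [h]; exact hv.symm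
              have h2 : e.1 ≠ v := by rw [h, hv]; exact huw.ne'
              rw [if_pos h1, if_neg h2, hT]
              push_cast; omega
          · rcases eq_or_ne v w with hv | hvw
            · -- v = w
              have hdw'v : (G'.degree v : ℤ) = (G.degree v : ℤ) - 1 := by rw [hv]; exact hdw'
              have hsw'v : sw' = orientedSum A' σ' v := by rw [hsw', hv]
              have hcv : c = ((G.degree v : ℤ) - 1) / 2 := by rw [hcw, hv]
              rcases Nat.eq_zero_or_pos (G'.degree v) with hdz | hdp
              · -- w isolated in G'
                have hs'w : orientedSum A' σ' v = 0 := (hbd' v).1 hdz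
                have hdegw1 : (G.degree v : ℤ) = 1 := by
                  have h0 := hdw'v; rw [hdz] at h0; push_cast at h0; omega
                have hswc : sw' ≤ c := by rw [hsw'v, hs'w, hcv, hdegw1]; omega
                have he' : e = (u, w) := by rw [he, if_pos hswc]
                have h1 : e.2 = v := by rw [he']; exact hv.symm
                have h2 : e.1 ≠ v := by rw [he']; exact fun hh => hvu hh.symm
                rw [hsum v, hs'w, if_pos h1, if_neg h2, hdegw1, hT]
                omega
              · have hbw := (hbd' v).2 hdp
                rw [hn1cast, hdw'v] at hbw
                by_cases hswc : sw' ≤ c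
                · have he' : e = (u, w) := by rw [he, if_pos hswc]
                  have h1 : e.2 = v := by rw [he']; exact hv.symm
                  have h2 : e.1 ≠ v := by rw [he']; exact fun hh => hvu hh.symm
                  rw [hsw'v, hcv] at hswc
                  rw [hsum v, if_pos h1, if_neg h2, hT]
                  omega
                · have he' : e = (w, u) := by rw [he, if_neg hswc]
                  have h1 : e.2 ≠ v := by rw [he']; exact fun hh => hvu hh.symm
                  have h2 : e.1 = v := by rw [he']; exact hv.symm
                  rw [hsw'v, hcv] at hswc
                  rw [hsum v, if_neg h1, if_pos h2, hT]
                  omega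
            · -- v untouched
              rw [hsum v]
              have h1 : e.2 ≠ v := by
                rcases he_cases with h | h <;> rw [h]
                · exact fun hh => hvw hh.symm
                · exact fun hh => hvu hh.symm
              have h2 : e.1 ≠ v := by
                rcases he_cases with h | h <;> rw [h]
                · exact fun hh => hvu hh.symm
                · exact fun hh => hvw hh.symm
              rw [if_neg h1, if_neg h2]
              have hdvv := hdeq v hvu hvw
              have := (hbd' v).2 (by rw [hdvv]; exact hpos)
              rw [hdvv, hn1cast] at this
              omega
    · -- CYCLE CASE
      have hk0 : 0 < k := by omega
      set g' : ℕ → V := fun i => g (i % k) with hg'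
      have hmodlt : ∀ i : ℕ, i % k < k := fun i => Nat.mod_lt _ hk0
      have hg'eq : ∀ i j : ℕ, g' i = g' j ↔ i % k = j % k := by
        intro i j
        constructor
        · intro h
          exact ginj _ _ (hmodlt i) (hmodlt j) h
        · intro h
          show g (i % k) = g (j % k)
          rw [h]
      have hmm : ∀ i : ℕ, i % k % k = i % k := fun i => Nat.mod_eq_of_lt (hmodlt i)
      have hone : ∀ i : ℕ, (i + 1) % k = (i % k + 1) % k := by
        intro i; rw [Nat.add_mod, Nat.mod_eq_of_lt (show 1 < k by omega)]
      have hsucc_cancel : ∀ i j : ℕ, (i + 1) % k = (j + 1) % k → i % k = j % k := by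
        intro i j h
        exact Nat.ModEq.add_right_cancel' 1 h
      have hm1 : ∀ j : ℕ, (j + k - 1 + 1) % k = j % k := by
        intro j
        have hjk : j + k - 1 + 1 = j + k := by omega
        rw [hjk, Nat.add_mod_right]
      have hg'adj : ∀ i : ℕ, G.Adj (g' i) (g' (i + 1)) := by
        intro i
        have hik : i % k < k := hmodlt i
        show G.Adj (g (i % k)) (g ((i + 1) % k))
        rcases Nat.lt_or_ge (i % k) (k - 1) with h | h
        · have h1 : (i + 1) % k = i % k + 1 := by
            rw [hone, Nat.mod_eq_of_lt (by omega)]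
          rw [h1]
          exact gadj _ (by omega)
        · have hik1 : i % k = k - 1 := by omega
          have h1 : (i + 1) % k = 0 := by
            rw [hone, hik1]
            have : k - 1 + 1 = k := by omega
            rw [this, Nat.mod_self]
          rw [hik1, h1]
          exact gwrap
      have hsep : ∀ i j : ℕ, i % k = (j + 1) % k → (i + 1) % k = j % k → False := by
        intro i j h1 h2
        have h3 : Nat.ModEq k (i + 1) (j + 2) := Nat.ModEq.add_right 1 h1
        have h4 : Nat.ModEq k j (j + 2) := (Nat.ModEq.symm h2).trans h3
        have h5 := h4.dvd
        have h6 : (k : ℤ) ∣ 2 := by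
          have he' : ((j + 2 : ℕ) : ℤ) - (j : ℤ) = 2 := by push_cast; ring
          rwa [he'] at h5
        have := Int.le_of_dvd (by norm_num) h6
        omega
      set arcf : ℕ → V × V := fun i => (g' (i + 1), g' i) with harcf
      set A₂ : Finset (V × V) := (Finset.range k).image arcf with hA₂
      set E₂ : Finset (Sym2 V) := (Finset.range k).image (fun i => s(g' i, g' (i + 1))) with hE₂
      have hE₂sub : E₂ ⊆ G.edgeFinset := by
        intro z hz
        rw [hE₂] at hz
        obtain ⟨i, hi, rfl⟩ := Finset.mem_image.1 hz
        rw [SimpleGraph.mem_edgeFinset]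
        exact hg'adj i
      have hcardE₂ : E₂.card = k := by
        rw [hE₂, Finset.card_image_of_injOn, Finset.card_range]
        intro i hi j hj h
        rw [Finset.mem_coe, Finset.mem_range] at hi hj
        rw [Sym2.eq_iff] at h
        rcases h with ⟨h1, h2⟩ | ⟨h1, h2⟩
        · have := (hg'eq i j).1 h1
          rwa [Nat.mod_eq_of_lt hi, Nat.mod_eq_of_lt hj] at this
        · exact (hsep i j ((hg'eq i (j + 1)).1 h1) ((hg'eq (i + 1) j).1 h2)).elim
      have hkn : k ≤ n := by
        rw [← hc, ← hcardE₂]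
        exact Finset.card_le_card hE₂sub
      set G' := G.deleteEdges ↑E₂ with hG'
      haveI instG' : DecidableRel G'.Adj := fun a b =>
        decidable_of_iff (G.Adj a b ∧ s(a, b) ∉ E₂)
          (by rw [hG', SimpleGraph.deleteEdges_adj, Finset.mem_coe])
      have hG'adj : ∀ a b : V, G'.Adj a b ↔ G.Adj a b ∧ s(a, b) ∉ E₂ := by
        intro a b
        rw [hG', SimpleGraph.deleteEdges_adj, Finset.mem_coe]
      have hES : G'.edgeSet = G.edgeSet \ ↑E₂ := by
        rw [hG']; exact SimpleGraph.edgeSet_deleteEdges _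
      have hEF : G'.edgeFinset = G.edgeFinset \ E₂ := by
        ext z
        simp [SimpleGraph.mem_edgeFinset, hES]
      have hcard' : G'.edgeFinset.card = n - k := by
        rw [hEF, Finset.card_sdiff_of_subset hE₂sub, hc, hcardE₂]
      obtain ⟨A', hor', σ', hinj', himg', hbd'⟩ := IH (n - k) (by omega) q G' hcard'
      -- labelling of the cycle arcs
      have hidx_eq : ∀ j, j < k → sInf {i : ℕ | g' i = g' j} = j := by
        intro j hj
        apply le_antisymm
        · exact Nat.sInf_le (show g' j = g' j from rfl)
        · refine le_csInf ⟨j, (rfl : g' j = g' j)⟩ ?_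
          intro i hi
          by_contra hlt
          push_neg at hlt
          have := (hg'eq i j).1 hi
          rw [Nat.mod_eq_of_lt (by omega), Nat.mod_eq_of_lt hj] at this
          omega
      set T₀ : ℤ := (q : ℤ) + ((n - k : ℕ) : ℤ) with hT₀
      set σ : V × V → ℤ :=
        fun a => if a ∈ A₂ then T₀ + 1 + (↑(sInf {i : ℕ | g' i = a.2}) : ℤ) else σ' a with hσ
      have harcmem : ∀ i, i < k → arcf i ∈ A₂ := by
        intro i hi
        rw [hA₂]
        exact Finset.mem_image.2 ⟨i, Finset.mem_range.2 hi, rfl⟩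
      have hσarc : ∀ i, i < k → σ (arcf i) = T₀ + 1 + (i : ℤ) := by
        intro i hi
        show (if arcf i ∈ A₂ then T₀ + 1 + (↑(sInf {i' : ℕ | g' i' = (arcf i).2}) : ℤ)
          else σ' (arcf i)) = T₀ + 1 + (i : ℤ)
        rw [if_pos (harcmem i hi)]
        have h2 : (arcf i).2 = g' i := rfl
        rw [h2, hidx_eq i hi]
      have hA₂edge : ∀ a ∈ A₂, s(a.1, a.2) ∈ E₂ := by
        intro a ha
        rw [hA₂] at ha
        obtain ⟨i, hi, rfl⟩ := Finset.mem_image.1 ha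
        rw [hE₂]
        refine Finset.mem_image.2 ⟨i, hi, ?_⟩
        exact Sym2.eq_swap
      have hA'G : ∀ a ∈ A', G.Adj a.1 a.2 ∧ s(a.1, a.2) ∉ E₂ := by
        intro a ha
        exact (hG'adj a.1 a.2).1 (hor'.1 a ha)
      have hA'A₂ : ∀ a ∈ A', a ∉ A₂ := by
        intro a ha hmem
        exact (hA'G a ha).2 (hA₂edge a hmem)
      have hdisj : Disjoint A' A₂ := Finset.disjoint_left.2 hA'A₂
      have hσA' : ∀ a ∈ A', σ a = σ' a := by
        intro a ha
        show (if a ∈ A₂ then T₀ + 1 + (↑(sInf {i : ℕ | g' i = a.2}) : ℤ) else σ' a) = σ' a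
        rw [if_neg (hA'A₂ a ha)]
      have hnkcast : ((n - k : ℕ) : ℤ) = (n : ℤ) - k := by omega
      have hrange' : ∀ a ∈ A', (q : ℤ) + 1 ≤ σ' a ∧ σ' a ≤ T₀ := by
        intro a ha
        have : σ' a ∈ A'.image σ' := Finset.mem_image_of_mem σ' ha
        rw [himg', Finset.mem_Icc] at this
        rw [hT₀]
        omega
      -- edge membership characterization at a cycle vertex
      have hedge_mem : ∀ (j : ℕ), j < k → ∀ x : V,
          (s(g' j, x) ∈ E₂ ↔ x = g' (j + 1) ∨ x = g' (j + k - 1)) := by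
        intro j hj x
        constructor
        · intro hz
          rw [hE₂] at hz
          obtain ⟨i, hi, heq⟩ := Finset.mem_image.1 hz
          rw [Finset.mem_range] at hi
          rw [Sym2.eq_iff] at heq
          rcases heq with ⟨h1, h2⟩ | ⟨h1, h2⟩
          · left
            rw [← h2]
            apply (hg'eq _ _).2
            rw [hone i, hone j, (hg'eq i j).1 h1]
          · right
            rw [← h1]
            apply (hg'eq _ _).2
            apply hsucc_cancel
            rw [hm1 j]
            exact (hg'eq (i + 1) j).1 h2
        · intro hx
          rcases hx with rfl | rfl
          · rw [hE₂]
            refine Finset.mem_image.2 ⟨j % k, Finset.mem_range.2 (hmodlt j), ?_⟩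
            have e1 : g' (j % k) = g' j := (hg'eq _ _).2 (hmm j)
            have e2 : g' (j % k + 1) = g' (j + 1) := (hg'eq _ _).2 (by rw [← hone j])
            rw [e1, e2]
          · rw [hE₂]
            refine Finset.mem_image.2 ⟨(j + k - 1) % k, Finset.mem_range.2 (hmodlt _), ?_⟩
            have e1 : g' ((j + k - 1) % k) = g' (j + k - 1) := (hg'eq _ _).2 (hmm _)
            have e2 : g' ((j + k - 1) % k + 1) = g' j := by
              apply (hg'eq _ _).2
              rw [← hone (j + k - 1), hm1 j]
            rw [e1, e2]
            exact Sym2.eq_swap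
      have hnbne : ∀ j : ℕ, j < k → g' (j + 1) ≠ g' (j + k - 1) := by
        intro j hj h
        have h1 := (hg'eq (j + 1) (j + k - 1)).1 h
        apply hsep (j + 1) j rfl
        have h2 : Nat.ModEq k (j + 1 + 1) (j + k - 1 + 1) := Nat.ModEq.add_right 1 h1
        have h2' : (j + 1 + 1) % k = (j + k - 1 + 1) % k := h2
        rw [hm1 j] at h2'
        exact h2'
      have hnbp : ∀ j : ℕ, j < k → g' (j + 1) ∈ G.neighborFinset (g' j) := by
        intro j hj
        rw [SimpleGraph.mem_neighborFinset]
        exact hg'adj j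
      have hnbm : ∀ j : ℕ, j < k → g' (j + k - 1) ∈ G.neighborFinset (g' j) := by
        intro j hj
        rw [SimpleGraph.mem_neighborFinset]
        have := (hg'adj (j + k - 1)).symm
        have e2 : g' (j + k - 1 + 1) = g' j := (hg'eq _ _).2 (hm1 j)
        rwa [e2] at this
      have hdeg2 : ∀ j : ℕ, j < k →
          2 ≤ G.degree (g' j) ∧ G'.degree (g' j) = G.degree (g' j) - 2 := by
        intro j hj
        have hnbG' : G'.neighborFinset (g' j) =
            ((G.neighborFinset (g' j)).erase (g' (j + 1))).erase (g' (j + k - 1)) := by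
          ext x
          rw [SimpleGraph.mem_neighborFinset, hG'adj, Finset.mem_erase, Finset.mem_erase,
            SimpleGraph.mem_neighborFinset]
          constructor
          · rintro ⟨h1, h2⟩
            refine ⟨fun hh => h2 ((hedge_mem j hj x).2 (Or.inr hh)),
              fun hh => h2 ((hedge_mem j hj x).2 (Or.inl hh)), h1⟩
          · rintro ⟨h1, h2, h3⟩
            refine ⟨h3, fun hh => ?_⟩
            rcases (hedge_mem j hj x).1 hh with h4 | h4
            · exact h2 h4
            · exact h1 h4
        have hcard2 : 2 ≤ (G.neighborFinset (g' j)).card :=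
          Finset.one_lt_card.2 ⟨_, hnbp j hj, _, hnbm j hj, hnbne j hj⟩
        constructor
        · rwa [← SimpleGraph.card_neighborFinset_eq_degree]
        · rw [← SimpleGraph.card_neighborFinset_eq_degree,
            ← SimpleGraph.card_neighborFinset_eq_degree, hnbG',
            Finset.card_erase_of_mem
              (Finset.mem_erase.2 ⟨(hnbne j hj).symm, hnbm j hj⟩),
            Finset.card_erase_of_mem (hnbp j hj)]
          omega
      -- off-cycle vertices
      have hoff_arc : ∀ v : V, (∀ i, i < k → v ≠ g' i) → ∀ a ∈ A₂, a.1 ≠ v ∧ a.2 ≠ v := by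
        intro v hv a ha
        rw [hA₂] at ha
        obtain ⟨i, hi, rfl⟩ := Finset.mem_image.1 ha
        rw [Finset.mem_range] at hi
        constructor
        · show g' (i + 1) ≠ v
          intro h
          refine hv ((i + 1) % k) (hmodlt _) ?_
          rw [← h]
          exact ((hg'eq _ _).2 (hmm _)).symm
        · show g' i ≠ v
          intro h
          exact hv i hi h.symm
      have hoff_deg : ∀ v : V, (∀ i, i < k → v ≠ g' i) → G'.degree v = G.degree v := by
        intro v hv
        rw [← SimpleGraph.card_neighborFinset_eq_degree,
          ← SimpleGraph.card_neighborFinset_eq_degree]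
        congr 1
        ext x
        rw [SimpleGraph.mem_neighborFinset, hG'adj, SimpleGraph.mem_neighborFinset]
        constructor
        · exact fun h => h.1
        · intro h
          refine ⟨h, fun hh => ?_⟩
          rw [hE₂] at hh
          obtain ⟨i, hi, heq⟩ := Finset.mem_image.1 hh
          rw [Finset.mem_range] at hi
          rw [Sym2.eq_iff] at heq
          rcases heq with ⟨h1, -⟩ | ⟨-, h2⟩
          · exact hv i hi h1.symm
          · refine hv ((i + 1) % k) (hmodlt _) ?_
            rw [← h2]
            exact ((hg'eq _ _).2 (hmm _)).symm
      -- filters at cycle vertices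
      have hfilter_in : ∀ j, j < k → A₂.filter (fun a => a.2 = g' j) = {arcf j} := by
        intro j hj
        ext a
        simp only [Finset.mem_filter, hA₂, Finset.mem_image, Finset.mem_range,
          Finset.mem_singleton]
        constructor
        · rintro ⟨⟨i, hi, rfl⟩, h2⟩
          have h3 : g' i = g' j := h2
          have : i = j := by
            have := (hg'eq i j).1 h3
            rwa [Nat.mod_eq_of_lt hi, Nat.mod_eq_of_lt hj] at this
          rw [this]
        · rintro rfl
          exact ⟨⟨j, hj, rfl⟩, rfl⟩
      have hfilter_out : ∀ j, j < k →
          A₂.filter (fun a => a.1 = g' j) = {arcf ((j + k - 1) % k)} := by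
        intro j hj
        have hkey : g' ((j + k - 1) % k + 1) = g' j := by
          apply (hg'eq _ _).2
          rw [← hone (j + k - 1), hm1 j]
        ext a
        simp only [Finset.mem_filter, hA₂, Finset.mem_image, Finset.mem_range,
          Finset.mem_singleton]
        constructor
        · rintro ⟨⟨i, hi, rfl⟩, h2⟩
          have h3 : g' (i + 1) = g' j := h2
          have h4 : i = (j + k - 1) % k := by
            have h5 := (hg'eq (i + 1) ((j + k - 1) % k + 1)).1 (by rw [h3, hkey])
            have h6 := hsucc_cancel _ _ h5
            rwa [Nat.mod_eq_of_lt hi, hmm] at h6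
          rw [h4]
        · rintro rfl
          exact ⟨⟨(j + k - 1) % k, hmodlt _, rfl⟩, hkey⟩
      have hcontrib : ∀ j, j < k → orientedSum A₂ σ (g' j) =
          (j : ℤ) - (((j + k - 1) % k : ℕ) : ℤ) := by
        intro j hj
        unfold orientedSum
        rw [hfilter_in j hj, hfilter_out j hj, Finset.sum_singleton, Finset.sum_singleton,
          hσarc j hj, hσarc _ (hmodlt _)]
        ring
      refine ⟨A' ∪ A₂, ⟨?_, ?_, ?_⟩, σ, ?_, ?_, ?_⟩
      · -- arcs adjacent
        intro a ha
        rcases Finset.mem_union.1 ha with h | h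
        · exact (hA'G a h).1
        · rw [hA₂] at h
          obtain ⟨i, hi, rfl⟩ := Finset.mem_image.1 h
          exact (hg'adj i).symm
      · -- covers
        intro x y hxy
        by_cases hxe : s(x, y) ∈ E₂
        · rw [hE₂] at hxe
          obtain ⟨i, hi, heq⟩ := Finset.mem_image.1 hxe
          rw [Sym2.eq_iff] at heq
          rcases heq with ⟨h1, h2⟩ | ⟨h1, h2⟩
          · right
            apply Finset.mem_union_right
            rw [hA₂]
            refine Finset.mem_image.2 ⟨i, hi, ?_⟩
            rw [harcf]
            show (g' (i + 1), g' i) = (y, x)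
            rw [h1, h2]
          · left
            apply Finset.mem_union_right
            rw [hA₂]
            refine Finset.mem_image.2 ⟨i, hi, ?_⟩
            show (g' (i + 1), g' i) = (x, y)
            rw [h1, h2]
        · have : G'.Adj x y := (hG'adj x y).2 ⟨hxy, hxe⟩
          rcases hor'.2.1 x y this with h | h
          · exact Or.inl (Finset.mem_union_left _ h)
          · exact Or.inr (Finset.mem_union_left _ h)
      · -- antisymmetry
        intro x y hxy hyx
        rcases Finset.mem_union.1 hxy with h1 | h1 <;> rcases Finset.mem_union.1 hyx with h2 | h2
        · exact hor'.2.2 x y h1 h2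
        · apply (hA'G (x, y) h1).2
          have := hA₂edge (y, x) h2
          rwa [show s((y,x).1, (y,x).2) = s((x,y).1, (x,y).2) from Sym2.eq_swap] at this
        · apply (hA'G (y, x) h2).2
          have := hA₂edge (x, y) h1
          rwa [show s((x,y).1, (x,y).2) = s((y,x).1, (y,x).2) from Sym2.eq_swap] at this
        · rw [hA₂] at h1 h2
          obtain ⟨i, hi, hieq⟩ := Finset.mem_image.1 h1
          obtain ⟨j, hj, hjeq⟩ := Finset.mem_image.1 h2
          rw [Finset.mem_range] at hi hj
          obtain ⟨hi1, hi2⟩ := Prod.mk.inj hieq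
          obtain ⟨hj1, hj2⟩ := Prod.mk.inj hjeq
          -- g'(i+1) = x = g' j, g' i = y = g'(j+1)
          apply hsep i j
          · exact (hg'eq i (j + 1)).1 (hi2.trans hj1.symm)
          · exact (hg'eq (i + 1) j).1 (hi1.trans hj2.symm)
      · -- injectivity
        intro a ha b hb hab
        rw [Finset.mem_coe] at ha hb
        rcases Finset.mem_union.1 ha with ha' | ha' <;> rcases Finset.mem_union.1 hb with hb' | hb'
        · rw [hσA' a ha', hσA' b hb'] at hab
          exact hinj' (Finset.mem_coe.2 ha') (Finset.mem_coe.2 hb') hab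
        · exfalso
          rw [hA₂] at hb'
          obtain ⟨i, hi, rfl⟩ := Finset.mem_image.1 hb'
          rw [Finset.mem_range] at hi
          rw [hσA' a ha', hσarc i hi] at hab
          have := hrange' a ha'
          omega
        · exfalso
          rw [hA₂] at ha'
          obtain ⟨i, hi, rfl⟩ := Finset.mem_image.1 ha'
          rw [Finset.mem_range] at hi
          rw [hσA' b hb', hσarc i hi] at hab
          have := hrange' b hb'
          omega
        · rw [hA₂] at ha' hb'
          obtain ⟨i, hi, rfl⟩ := Finset.mem_image.1 ha'
          obtain ⟨j, hj, rfl⟩ := Finset.mem_image.1 hb'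
          rw [Finset.mem_range] at hi hj
          rw [hσarc i hi, hσarc j hj] at hab
          have : i = j := by omega
          rw [this]
      · -- image
        rw [Finset.image_union]
        have h1 : A'.image σ = A'.image σ' := Finset.image_congr (fun a ha => hσA' a ha)
        have h2 : A₂.image σ = (Finset.range k).image (fun i : ℕ => T₀ + 1 + (i : ℤ)) := by
          rw [hA₂, Finset.image_image]
          apply Finset.image_congr
          intro i hi
          rw [Finset.mem_coe, Finset.mem_range] at hi
          exact hσarc i hi
        rw [h1, h2, himg']
        ext z
        simp only [Finset.mem_union, Finset.mem_Icc, Finset.mem_image, Finset.mem_range]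
        rw [hT₀]
        constructor
        · rintro (⟨hz1, hz2⟩ | ⟨i, hi, rfl⟩) <;> omega
        · intro ⟨hz1, hz2⟩
          rcases le_or_gt z ((q : ℤ) + ((n - k : ℕ) : ℤ)) with h | h
          · left; omega
          · right
            refine ⟨(z - ((q : ℤ) + ((n - k : ℕ) : ℤ) + 1)).toNat, by omega, by omega⟩
      · -- bounds
        have hsum : ∀ v : V, orientedSum (A' ∪ A₂) σ v =
            orientedSum A' σ' v + orientedSum A₂ σ v := by
          intro v
          rw [orientedSum_union hdisj, orientedSum_congr hσA']
        intro v
        by_cases hvc : ∃ j, j < k ∧ v = g' j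
        · -- on the cycle
          obtain ⟨j, hj, rfl⟩ := hvc
          have hd2 := hdeg2 j hj
          constructor
          · intro h0
            omega
          · intro hpos
            rw [hsum _, hcontrib j hj]
            have hcontribval : (j : ℤ) - (((j + k - 1) % k : ℕ) : ℤ) =
                if j = 0 then 1 - (k : ℤ) else 1 := by
              rcases Nat.eq_zero_or_pos j with rfl | hj1
              · rw [if_pos rfl]
                have : (0 + k - 1) % k = k - 1 := by
                  have h9 : 0 + k - 1 = k - 1 := by omega
                  rw [h9]; exact Nat.mod_eq_of_lt (by omega)
                rw [this]
                omega
              · rw [if_neg (by omega)]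
                have hh : j + k - 1 = (j - 1) + k := by omega
                have : (j + k - 1) % k = j - 1 := by
                  rw [hh, Nat.add_mod_right, Nat.mod_eq_of_lt (by omega)]
                rw [this]
                omega
            rcases Nat.eq_zero_or_pos (G'.degree (g' j)) with hdz | hdp
            · have hs0 : orientedSum A' σ' (g' j) = 0 := (hbd' _).1 hdz
              have hdeqv : G.degree (g' j) = 2 := by omega
              rw [hs0, hdeqv, hcontribval]
              split_ifs <;> push_cast <;> omega
            · have hbw := (hbd' _).2 hdp
              have hdeqv : (G'.degree (g' j) : ℤ) = (G.degree (g' j) : ℤ) - 2 := by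
                omega
              rw [hT₀] at hbw
              rw [hdeqv, hnkcast] at hbw
              rw [hcontribval]
              split_ifs <;> omega
        · -- off the cycle
          push_neg at hvc
          have hz : orientedSum A₂ σ v = 0 :=
            orientedSum_zero (hoff_arc v (fun i hi => (hvc i hi)))
          have hdeq := hoff_deg v (fun i hi => hvc i hi)
          rw [hsum v, hz, add_zero]
          constructor
          · intro h0
            exact (hbd' v).1 (by omega)
          · intro hpos
            have := (hbd' v).2 (by omega)
            rw [hT₀] at this
            rw [hdeq, hnkcast] at this
            omega

/-- Lemma 2.3: for `p ≥ 0`, `m ≥ 1` and a graph `G` with `m` edges, there are an orientation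
`A` of `G` and a bijection `σ` from the arcs to `{p+1, …, p+m}` such that every oriented
vertex sum lies between `⌊(d_G(v)-1)/2⌋ - (p+m)` and `⌊(d_G(v)-1)/2⌋ + (p+m)`. -/
theorem consecutive_labels_orientation
    (G : SimpleGraph V) [DecidableRel G.Adj] (p m : ℕ) (hm : 1 ≤ m)
    (hcard : G.edgeFinset.card = m) :
    ∃ A : Finset (V × V), IsOrientation G A ∧
      ∃ σ : V × V → ℤ, Set.InjOn σ A ∧
        A.image σ = Finset.Icc ((p : ℤ) + 1) ((p : ℤ) + m) ∧
        ∀ v : V,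
          ((G.degree v : ℤ) - 1) / 2 - ((p : ℤ) + m) ≤ orientedSum A σ v ∧
          orientedSum A σ v ≤ ((G.degree v : ℤ) - 1) / 2 + ((p : ℤ) + m) := by
  obtain ⟨A, hor, σ, hinj, himg, hbd⟩ := key m p G hcard
  refine ⟨A, hor, σ, hinj, himg, ?_⟩
  intro v
  rcases Nat.eq_zero_or_pos (G.degree v) with h0 | hpos
  · have hz := (hbd v).1 h0
    rw [hz, h0]
    constructor <;> push_cast <;> omega
  · exact (hbd v).2 hpos
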